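/- Let p ≥ 1 be an integer and s ≥ 1 a real number. There exists a constant k > 0, depending only on p and s, such that for all unit vectors x, y ∈ ℝ^p with x ≠ −y: ∫_0^{π/2} (cos θ · sin θ)^{s−1} / ‖cos θ · x + sin θ · y‖^{2s} dθ ≥ k / ‖x + y‖^{2s−1}. -/

import Mathlib

open Real


private lemma two_mul_cos_sin_le_one (θ : ℝ) : 2 * (Real.cos θ * Real.sin θ) ≤ 1 := by
  nlinarith [sq_nonneg (Real.cos θ - Real.sin θ), Real.sin_sq_add_cos_sq θ]

private lemma pos_of_sq_pos {a : ℝ} (h0 : 0 ≤ a) (h : 0 < a ^ 2) : 0 < a := by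
  nlinarith

private lemma norm_sq_aux {u ε : ℝ} (hu : 0 ≤ u) (hu1 : 2 * u ≤ 1) (hε : 0 < ε) :
    0 < (1 - 2 * u) + 2 * u * ε := by
  nlinarith [mul_nonneg hu hε.le]

private lemma aux_rpow_algebra (c δ A B T E1 E2 : ℝ) (hA : 0 < A) (hB : 0 < B)
    (hT : 0 < T) (h1 : 0 < E1) (h2 : 0 < E2) (key : c * E1 ≤ δ) :
    c * A * B / T / (B * E2) ≤ δ * (A / (T * (E2 * E1))) := by
  have heq : c * A * B / T / (B * E2) = (c * E1) * (A / (T * (E2 * E1))) := by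
    field_simp
  rw [heq]
  exact mul_le_mul_of_nonneg_right key (by positivity)

/-- Lemma 3.2 of the paper: for all unit vectors `x, y ∈ ℝᵖ` with `x ≠ -y` and `s ≥ 1`,
there is a constant `k = k(p, s) > 0` such that
`∫_0^{π/2} (cos θ sin θ)^{s-1} / ‖cos θ · x + sin θ · y‖^{2s} dθ ≥ k / ‖x + y‖^{2s-1}`. -/
theorem lower_bound_integral (p : ℕ) (hp : 1 ≤ p) (s : ℝ) (hs : 1 ≤ s) :
    ∃ k > (0 : ℝ), ∀ x y : EuclideanSpace ℝ (Fin p), ‖x‖ = 1 → ‖y‖ = 1 → x ≠ -y →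
      k / ‖x + y‖ ^ (2 * s - 1) ≤
        ∫ θ in (0 : ℝ)..(π / 2),
          (Real.cos θ * Real.sin θ) ^ (s - 1) /
            ‖Real.cos θ • x + Real.sin θ • y‖ ^ (2 * s) := by
  have hpi : (0:ℝ) < π := Real.pi_pos
  obtain ⟨c, hc⟩ : ∃ c : ℝ, c = π / (8 * Real.sqrt 2) := ⟨_, rfl⟩
  have hsqrt2 : (1:ℝ) ≤ Real.sqrt 2 := by
    nlinarith [Real.sq_sqrt (by norm_num : (0:ℝ) ≤ 2), Real.sqrt_nonneg 2]
  have hcpos : 0 < c := by rw [hc]; positivity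
  refine ⟨c * (1/4 : ℝ) ^ (s - 1) * 2 ^ (s - 1/2) / 3 ^ s, by positivity, ?_⟩
  intro x y hx hy hxy
  obtain ⟨t, ht⟩ : ∃ t : ℝ, t = (inner ℝ x y : ℝ) := ⟨_, rfl⟩
  obtain ⟨ε, hεdef⟩ : ∃ ε : ℝ, ε = 1 + t := ⟨_, rfl⟩
  -- basic facts
  have ht1 : t ≤ 1 := by
    have h := real_inner_le_norm x y
    rw [hx, hy, ← ht] at h; simpa using h
  have h2ε : ‖x + y‖ ^ 2 = 2 * ε := by
    have h := norm_add_sq_real x y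
    rw [hx, hy, ← ht] at h; rw [h, hεdef]; ring
  have hne : x + y ≠ 0 := fun h => hxy (add_eq_zero_iff_eq_neg.mp h)
  have hnpos : 0 < ‖x + y‖ := norm_pos_iff.mpr hne
  have hεpos : 0 < ε := by linarith [pow_pos hnpos 2, h2ε]
  have hε2 : ε ≤ 2 := by rw [hεdef]; linarith
  -- norm formula
  have hv : ∀ θ : ℝ, ‖Real.cos θ • x + Real.sin θ • y‖ ^ 2
      = (1 - 2 * (Real.cos θ * Real.sin θ)) + 2 * (Real.cos θ * Real.sin θ) * ε := by
    intro θ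
    have h1 := norm_add_sq_real (Real.cos θ • x) (Real.sin θ • y)
    rw [real_inner_smul_left, real_inner_smul_right, norm_smul, norm_smul, hx, hy, ← ht] at h1
    rw [h1]
    simp only [Real.norm_eq_abs, mul_one, sq_abs, hεdef]
    linear_combination Real.sin_sq_add_cos_sq θ
  -- positivity of the norm on [0, π/2]
  have hvpos : ∀ θ ∈ Set.Icc (0:ℝ) (π/2), 0 < ‖Real.cos θ • x + Real.sin θ • y‖ := by
    intro θ hθ
    have hcn : 0 ≤ Real.cos θ := Real.cos_nonneg_of_mem_Icc ⟨by linarith [hθ.1], hθ.2⟩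
    have hsn : 0 ≤ Real.sin θ := Real.sin_nonneg_of_nonneg_of_le_pi hθ.1 (by linarith [hθ.2])
    have hsq : 0 < ‖Real.cos θ • x + Real.sin θ • y‖ ^ 2 := by
      rw [hv θ]; exact norm_sq_aux (mul_nonneg hcn hsn) (two_mul_cos_sin_le_one θ) hεpos
    exact pos_of_sq_pos (norm_nonneg _) hsq
  -- the integrand
  obtain ⟨f, hfdef⟩ : ∃ f : ℝ → ℝ, f = fun θ => (Real.cos θ * Real.sin θ) ^ (s - 1) /
      ‖Real.cos θ • x + Real.sin θ • y‖ ^ (2 * s) := ⟨_, rfl⟩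
  rw [show (∫ θ in (0:ℝ)..(π/2), (Real.cos θ * Real.sin θ) ^ (s - 1) /
      ‖Real.cos θ • x + Real.sin θ • y‖ ^ (2 * s)) = ∫ θ in (0:ℝ)..(π/2), f θ by rw [hfdef]]
  have hfc : ContinuousOn f (Set.Icc 0 (π/2)) := by
    rw [hfdef]
    apply ContinuousOn.div
    · exact ((Real.continuous_cos.mul Real.continuous_sin).rpow_const
        (fun θ => Or.inr (by linarith))).continuousOn
    · exact ((((Real.continuous_cos.smul continuous_const).add
        (Real.continuous_sin.smul continuous_const)).norm).rpow_const
        (fun θ => Or.inr (by linarith))).continuousOn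
    · intro θ hθ
      exact ne_of_gt (Real.rpow_pos_of_pos (hvpos θ hθ) _)
  have hfnn : ∀ θ ∈ Set.Icc (0:ℝ) (π/2), 0 ≤ f θ := by
    intro θ hθ
    have hcn : 0 ≤ Real.cos θ := Real.cos_nonneg_of_mem_Icc ⟨by linarith [hθ.1], hθ.2⟩
    have hsn : 0 ≤ Real.sin θ := Real.sin_nonneg_of_nonneg_of_le_pi hθ.1 (by linarith [hθ.2])
    rw [hfdef]
    exact div_nonneg (Real.rpow_nonneg (mul_nonneg hcn hsn) _)
      (Real.rpow_nonneg (norm_nonneg _) _)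
  -- the sub-interval
  obtain ⟨δ, hδdef⟩ : ∃ δ : ℝ, δ = min (Real.sqrt ε) (π/8) := ⟨_, rfl⟩
  have hδpos : 0 < δ := by
    rw [hδdef]; exact lt_min (Real.sqrt_pos.mpr hεpos) (by linarith)
  have hδle : δ ≤ π/8 := by rw [hδdef]; exact min_le_right _ _
  have hδε : δ ≤ Real.sqrt ε := by rw [hδdef]; exact min_le_left _ _
  have hab : π/4 + δ ≤ π/2 := by linarith
  have hInt : ∀ a b : ℝ, 0 ≤ a → a ≤ b → b ≤ π/2 →
      IntervalIntegrable f MeasureTheory.volume a b := by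
    intro a b ha hab' hb
    apply ContinuousOn.intervalIntegrable
    rw [Set.uIcc_of_le hab']
    exact hfc.mono (Set.Icc_subset_Icc ha hb)
  have hi1 : IntervalIntegrable f MeasureTheory.volume 0 (π/4) :=
    hInt _ _ le_rfl (by linarith) (by linarith)
  have hi2 : IntervalIntegrable f MeasureTheory.volume (π/4) (π/4 + δ) :=
    hInt _ _ (by linarith) (by linarith) hab
  have hi3 : IntervalIntegrable f MeasureTheory.volume (π/4 + δ) (π/2) :=
    hInt _ _ (by linarith) hab le_rfl
  -- pointwise bound on the middle interval
  obtain ⟨m, hm⟩ : ∃ m : ℝ, m = (1/4 : ℝ) ^ (s - 1) / (3 * ε) ^ s := ⟨_, rfl⟩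
  have hpt : ∀ θ ∈ Set.Icc (π/4) (π/4 + δ), m ≤ f θ := by
    intro θ hθ
    have hθ1 : π/4 ≤ θ := hθ.1
    have hθ2 : θ ≤ π/4 + δ := hθ.2
    have hθI : θ ∈ Set.Icc (0:ℝ) (π/2) := ⟨by linarith, by linarith⟩
    have hcos2 : Real.cos θ * Real.sin θ = Real.cos (2*θ - π/2) / 2 := by
      rw [show 2*θ - π/2 = -(π/2 - 2*θ) by ring, Real.cos_neg, Real.cos_pi_div_two_sub,
        Real.sin_two_mul]
      ring
    have hx0 : 0 ≤ 2*θ - π/2 := by linarith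
    have hx1 : 2*θ - π/2 ≤ π/4 := by linarith
    have hccc : Real.cos (π/4) ≤ Real.cos (2*θ - π/2) :=
      Real.cos_le_cos_of_nonneg_of_le_pi hx0 (by linarith) hx1
    rw [Real.cos_pi_div_four] at hccc
    have hcs : (1/4 : ℝ) ≤ Real.cos θ * Real.sin θ := by
      rw [hcos2]; linarith
    have hδsq : δ ^ 2 ≤ ε := by
      calc δ ^ 2 ≤ Real.sqrt ε ^ 2 := pow_le_pow_left₀ hδpos.le hδε 2
      _ = ε := Real.sq_sqrt hεpos.le
    have hquad : 1 - (2*θ - π/2)^2/2 ≤ Real.cos (2*θ - π/2) := Real.one_sub_sq_div_two_le_cos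
    have h1m : 1 - 2 * (Real.cos θ * Real.sin θ) ≤ 2 * ε := by
      have hsq2 : (2*θ - π/2) ^ 2 ≤ (2*δ) ^ 2 := pow_le_pow_left₀ hx0 (by linarith) 2
      have h4 : (2*δ) ^ 2 = 4 * δ ^ 2 := by ring
      rw [hcos2]
      linarith [hquad]
    have hcs1 : 2 * (Real.cos θ * Real.sin θ) ≤ 1 := two_mul_cos_sin_le_one θ
    have hnsq : ‖Real.cos θ • x + Real.sin θ • y‖ ^ 2 ≤ 3 * ε := by
      rw [hv θ]
      have hmul : 2 * (Real.cos θ * Real.sin θ) * ε ≤ 1 * ε :=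
        mul_le_mul_of_nonneg_right hcs1 hεpos.le
      linarith
    have hden : ‖Real.cos θ • x + Real.sin θ • y‖ ^ (2*s) ≤ (3 * ε) ^ s := by
      have h1 : ‖Real.cos θ • x + Real.sin θ • y‖ ^ (2*s)
          = (‖Real.cos θ • x + Real.sin θ • y‖ ^ 2) ^ s := by
        rw [← Real.rpow_natCast ‖Real.cos θ • x + Real.sin θ • y‖ 2,
          ← Real.rpow_mul (norm_nonneg _)]
        norm_num
      rw [h1]
      exact Real.rpow_le_rpow (sq_nonneg _) hnsq (by linarith)
    have hnum : (1/4 : ℝ) ^ (s - 1) ≤ (Real.cos θ * Real.sin θ) ^ (s - 1) :=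
      Real.rpow_le_rpow (by norm_num) hcs (by linarith)
    have hdpos : 0 < ‖Real.cos θ • x + Real.sin θ • y‖ ^ (2*s) :=
      Real.rpow_pos_of_pos (hvpos θ hθI) _
    rw [hm, hfdef]
    exact div_le_div₀ (Real.rpow_nonneg (by linarith : (0:ℝ) ≤ Real.cos θ * Real.sin θ) _)
      hnum hdpos hden
  -- lower bound for the middle integral
  have hmid : δ * m ≤ ∫ θ in (π/4)..(π/4 + δ), f θ := by
    have h := intervalIntegral.integral_mono_on (by linarith : π/4 ≤ π/4 + δ)
      (intervalIntegrable_const (c := m)) hi2 hpt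
    rw [intervalIntegral.integral_const, smul_eq_mul] at h
    calc δ * m = (π/4 + δ - π/4) * m := by ring
    _ ≤ _ := h
  -- assemble
  have hsplit : (∫ θ in (0:ℝ)..(π/2), f θ)
      = (∫ θ in (0:ℝ)..(π/4), f θ) + (∫ θ in (π/4)..(π/4+δ), f θ)
        + (∫ θ in (π/4+δ)..(π/2), f θ) := by
    rw [intervalIntegral.integral_add_adjacent_intervals hi1 hi2,
      intervalIntegral.integral_add_adjacent_intervals (hi1.trans hi2) hi3]
  have hside1 : 0 ≤ ∫ θ in (0:ℝ)..(π/4), f θ :=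
    intervalIntegral.integral_nonneg (by linarith) (fun u hu => hfnn u ⟨hu.1, by linarith [hu.2]⟩)
  have hside2 : 0 ≤ ∫ θ in (π/4+δ)..(π/2), f θ :=
    intervalIntegral.integral_nonneg hab (fun u hu => hfnn u ⟨by linarith [hu.1], hu.2⟩)
  have htot : δ * m ≤ ∫ θ in (0:ℝ)..(π/2), f θ := by
    rw [hsplit]; linarith
  refine le_trans ?_ htot
  -- final computation
  have hnorm : ‖x + y‖ = Real.sqrt (2*ε) := by
    rw [← h2ε, Real.sqrt_sq (norm_nonneg _)]
  have hpow : ‖x + y‖ ^ (2*s - 1) = (2*ε) ^ (s - 1/2) := by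
    rw [hnorm, Real.sqrt_eq_rpow, ← Real.rpow_mul (by positivity)]
    congr 1
    ring
  have hcδ : c * Real.sqrt ε ≤ δ := by
    rcases le_total (Real.sqrt ε) (π/8) with h | h
    · rw [hδdef, min_eq_left h]
      have hc1 : c ≤ 1 := by
        rw [hc, div_le_one (by positivity)]
        linarith [Real.pi_le_four]
      exact mul_le_of_le_one_left (Real.sqrt_nonneg ε) hc1
    · rw [hδdef, min_eq_right h]
      have hsle : Real.sqrt ε ≤ Real.sqrt 2 := Real.sqrt_le_sqrt hε2
      have h2 : c * Real.sqrt 2 = π/8 := by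
        rw [hc]
        field_simp
      calc c * Real.sqrt ε ≤ c * Real.sqrt 2 := mul_le_mul_of_nonneg_left hsle hcpos.le
      _ = π/8 := h2
  -- rpow algebra
  have h3s : (0:ℝ) < 3 ^ s := Real.rpow_pos_of_pos (by norm_num) s
  have h2s : (0:ℝ) < 2 ^ (s - 1/2) := Real.rpow_pos_of_pos (by norm_num) _
  have hA : (0:ℝ) < (1/4 : ℝ) ^ (s - 1) := Real.rpow_pos_of_pos (by norm_num) _
  have hε12 : (0:ℝ) < ε ^ (1/2 : ℝ) := Real.rpow_pos_of_pos hεpos _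
  have hεs2 : (0:ℝ) < ε ^ (s - 1/2) := Real.rpow_pos_of_pos hεpos _
  have h3e : (3*ε) ^ s = 3 ^ s * ε ^ s := Real.mul_rpow (by norm_num) hεpos.le
  have h2e : (2*ε) ^ (s - 1/2) = 2 ^ (s - 1/2) * ε ^ (s - 1/2) :=
    Real.mul_rpow (by norm_num) hεpos.le
  have hεsplit : ε ^ s = ε ^ (s - 1/2) * ε ^ (1/2 : ℝ) := by
    rw [← Real.rpow_add hεpos]; norm_num
  have key : c * ε ^ (1/2:ℝ) ≤ δ := by rw [← Real.sqrt_eq_rpow]; exact hcδ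
  rw [hpow, hm, h3e, h2e, hεsplit]
  exact aux_rpow_algebra c δ _ _ _ _ _ hA h2s h3s hε12 hεs2 key
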